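/- Suppose the index set {1,…,n} is partitioned into nonempty sets I₁, I₂, with θᵢ = −γ/2 for i ∈ I₁ and θᵢ = +γ/2 for i ∈ I₂, where γ ∈ [0, π], and ωᵢ = ω_min for i ∈ I₁, ωᵢ = ω_max for i ∈ I₂. Then for m ∈ I₂ and ℓ ∈ I₁, the quantity (ω_m − ω_ℓ) − (K/n)·∑_{i=1}^n [sin(θ_m − θ_i) + sin(θ_i − θ_ℓ)] equals exactly (ω_max − ω_min) − K·sin(γ). -/

import Mathlib

open Real Finset

/-- Tightness for the bipolar distribution: with the oscillators split into two
clusters at `−γ/2` and `+γ/2` with frequencies `ω_min` and `ω_max`, the Dini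
derivative expression equals exactly `(ω_max − ω_min) − K sin γ`. -/
theorem stmt_7 (n : ℕ) (θ ω : Fin n → ℝ) (K γ ωmin ωmax : ℝ) (hK : 0 < K)
    (hγ : γ ∈ Set.Icc (0:ℝ) π)
    (I₁ I₂ : Finset (Fin n))
    (hne₁ : I₁.Nonempty) (hne₂ : I₂.Nonempty)
    (hdisj : Disjoint I₁ I₂) (hunion : I₁ ∪ I₂ = Finset.univ)
    (hθ₁ : ∀ i ∈ I₁, θ i = -γ / 2) (hθ₂ : ∀ i ∈ I₂, θ i = γ / 2)
    (hω₁ : ∀ i ∈ I₁, ω i = ωmin) (hω₂ : ∀ i ∈ I₂, ω i = ωmax)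
    (m ℓ : Fin n) (hm : m ∈ I₂) (hℓ : ℓ ∈ I₁) :
    (ω m - ω ℓ) -
        (K / n) * ∑ i, (Real.sin (θ m - θ i) + Real.sin (θ i - θ ℓ)) =
      (ωmax - ωmin) - K * Real.sin γ := by
  have hn : 0 < n := m.pos
  have hθm : θ m = γ / 2 := hθ₂ m hm
  have hθℓ : θ ℓ = -γ / 2 := hθ₁ ℓ hℓ
  have hsum : ∑ i, (Real.sin (θ m - θ i) + Real.sin (θ i - θ ℓ)) = n * Real.sin γ := by
    have : ∀ i ∈ Finset.univ, Real.sin (θ m - θ i) + Real.sin (θ i - θ ℓ) = Real.sin γ := by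
      intro i _
      have hi : i ∈ I₁ ∪ I₂ := by rw [hunion]; exact Finset.mem_univ i
      rcases Finset.mem_union.mp hi with h | h
      · rw [hθ₁ i h, hθm, hθℓ]
        ring_nf
        simp
      · rw [hθ₂ i h, hθm, hθℓ]
        ring_nf
        simp
    rw [Finset.sum_congr rfl this]
    simp [mul_comm]
  rw [hsum, hω₂ m hm, hω₁ ℓ hℓ]
  field_simp
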